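/- Let Ψ be an m-order n-dimensional real symmetric tensor and 𝒯 the associated m-order 2n-dimensional real symmetric tensor defined by 𝒯_{i₁⋯i_m} = (−1)^j Ψ_{î₁⋯î_m} when exactly 2j of the indices exceed n, and 0 when an odd number of indices exceed n. Then the Frobenius norm satisfies ‖𝒯‖ = 2^{(m−1)/2} ‖Ψ‖. -/

import Mathlib

open Finset

noncomputable section

/-- Contraction `T z^m` of an `(m+1)`-order tensor with entries in `ℂ`. -/
def tapplyC {m : ℕ} {ι : Type} [Fintype ι] (T : (Fin (m + 1) → ι) → ℂ)
    (z : ι → ℂ) : ι → ℂ :=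
  fun i => ∑ f : Fin m → ι, T (Fin.cons i f) * ∏ j, z (f j)

/-- Contraction `T x^m` of an `(m+1)`-order tensor with entries in `ℝ`. -/
def tapplyR {m : ℕ} {ι : Type} [Fintype ι] (T : (Fin (m + 1) → ι) → ℝ)
    (x : ι → ℝ) : ι → ℝ :=
  fun i => ∑ f : Fin m → ι, T (Fin.cons i f) * ∏ j, x (f j)

/-- A tensor is symmetric if its entries are invariant under index permutations. -/
def SymmT {m : ℕ} {ι R : Type} (T : (Fin m → ι) → R) : Prop :=
  ∀ (σ : Equiv.Perm (Fin m)) (f : Fin m → ι), T (f ∘ σ) = T f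

/-- `lam` is a Q-eigenvalue of the complex tensor `T` with Q-eigenvector `z`:
`T z^{m} = lam * conj z` and `z̄ᵀ z = 1`. -/
def IsQEig {m : ℕ} {ι : Type} [Fintype ι] (T : (Fin (m + 1) → ι) → ℂ)
    (lam : ℝ) (z : ι → ℂ) : Prop :=
  tapplyC T z = (fun i => (lam : ℂ) * (starRingEnd ℂ) (z i)) ∧
    ∑ i, (starRingEnd ℂ) (z i) * z i = 1

/-- `lam` is a Z-eigenvalue of the real tensor `T` with Z-eigenvector `x`. -/
def IsZEig {m : ℕ} {ι : Type} [Fintype ι] (T : (Fin (m + 1) → ι) → ℝ)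
    (lam : ℝ) (x : ι → ℝ) : Prop :=
  tapplyR T x = (fun i => lam * x i) ∧ ∑ i, x i ^ 2 = 1

/-- Complexification of a real tensor. -/
def toC {m : ℕ} {ι : Type} (T : (Fin (m + 1) → ι) → ℝ) :
    (Fin (m + 1) → ι) → ℂ := fun f => ((T f : ℝ) : ℂ)

/-- The entanglement eigenvalue of a real tensor: largest Q-eigenvalue. -/
def QmaxR {m : ℕ} {ι : Type} [Fintype ι] (T : (Fin (m + 1) → ι) → ℝ) : ℝ :=
  sSup {lam : ℝ | ∃ z : ι → ℂ, IsQEig (toC T) lam z}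

/-- The Z-spectral radius of a real tensor: largest `|λ|` over Z-eigenvalues. -/
def Zrad {m : ℕ} {ι : Type} [Fintype ι] (T : (Fin (m + 1) → ι) → ℝ) : ℝ :=
  sSup {r : ℝ | ∃ (lam : ℝ) (x : ι → ℝ), IsZEig T lam x ∧ r = |lam|}

/-- Frobenius norm of a real tensor. -/
def fnorm {m : ℕ} {ι : Type} [Fintype ι] (T : (Fin m → ι) → ℝ) : ℝ :=
  Real.sqrt (∑ f : Fin m → ι, T f ^ 2)

lemma evenSum (k : ℕ) (c : ℝ) :
    ∑ s : Fin (k+1) → Bool, (if Even ((univ.filter fun t => s t = true).card) then c else 0)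
      = 2 ^ k * c := by
  induction k with
  | zero =>
    rw [show (2:ℝ)^0 * c = c by ring]
    rw [← (Equiv.funUnique (Fin 1) Bool).symm.sum_comp]
    simp [Fintype.sum_bool, Finset.filter_eq']
  | succ k ih =>
    rw [← (Fin.consEquiv (fun _ : Fin (k+2) => Bool)).sum_comp]
    rw [Fintype.sum_prod_type, Fintype.sum_bool]
    have key : ∀ (b : Bool) (s : Fin (k+1) → Bool),
        (univ.filter fun t => (Fin.consEquiv (fun _ : Fin (k+2) => Bool)) (b, s) t = true).card
          = (if b then 1 else 0) + (univ.filter fun t => s t = true).card := by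
      intro b s
      simp only [Finset.card_filter]
      rw [Fin.sum_univ_succ]
      simp [Fin.consEquiv]
    simp only [key]
    rw [← Finset.sum_add_distrib]
    have h2 : ∀ s : Fin (k + 1) → Bool,
        ((if Even ((if True then 1 else 0) + (univ.filter fun t => s t = true).card) then c else 0)
        + (if Even ((if false = true then 1 else 0) + (univ.filter fun t => s t = true).card) then c else 0)) = c := by
      intro s
      by_cases h : Even ((univ.filter fun t => s t = true).card) <;> simp [h, Nat.even_add]
    rw [Finset.sum_congr rfl fun s _ => h2 s, Finset.sum_const]
    simp [pow_succ]

def sgnEquiv (n : ℕ) : (Fin n ⊕ Fin n) ≃ Fin n × Bool where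
  toFun x := (Sum.elim id id x, x.isRight)
  invFun p := if p.2 then .inr p.1 else .inl p.1
  left_inv := by rintro (i | i) <;> simp
  right_inv := by rintro ⟨i, b⟩; cases b <;> simp

lemma sgnEquiv_symm_isRight (n : ℕ) (i : Fin n) (b : Bool) :
    ((sgnEquiv n).symm (i, b)).isRight = b := by cases b <;> simp [sgnEquiv]

lemma sgnEquiv_symm_elim (n : ℕ) (i : Fin n) (b : Bool) :
    Sum.elim id id ((sgnEquiv n).symm (i, b)) = i := by cases b <;> simp [sgnEquiv]

def convEquiv (m n : ℕ) : (Fin (m+1) → Fin n ⊕ Fin n) ≃ (Fin (m+1) → Fin n) × (Fin (m+1) → Bool) :=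
  (Equiv.arrowCongr (Equiv.refl _) (sgnEquiv n)).trans (Equiv.arrowProdEquivProdArrow _ _ _)


/-- the Frobenius norm of the converted tensor 𝒯 of a real symmetric
tensor Ψ satisfies ‖𝒯‖ = 2^{(m-1)/2} ‖Ψ‖ (here the order is m + 1). -/
theorem converted_tensor_norm {m n : ℕ} (hm : 1 ≤ m)
    (Ψ : (Fin (m + 1) → Fin n) → ℝ) (hΨ : SymmT Ψ)
    (𝒯 : (Fin (m + 1) → Fin n ⊕ Fin n) → ℝ)
    (h𝒯 : ∀ g : Fin (m + 1) → Fin n ⊕ Fin n,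
      𝒯 g =
        if Even ((Finset.univ.filter fun t => (g t).isRight = true).card) then
          (-1 : ℝ) ^ (((Finset.univ.filter fun t => (g t).isRight = true).card) / 2) *
            Ψ (fun t => Sum.elim id id (g t))
        else 0) :
    fnorm 𝒯 = (2 : ℝ) ^ ((m : ℝ) / 2) * fnorm Ψ := by
  have hE1 : ∀ (f : Fin (m+1) → Fin n) (s : Fin (m+1) → Bool) (t : Fin (m+1)),
      ((convEquiv m n).symm (f, s) t).isRight = s t := by
    intro f s t
    simp [convEquiv, Equiv.arrowCongr, Equiv.arrowProdEquivProdArrow, sgnEquiv_symm_isRight]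
  have hE2 : ∀ (f : Fin (m+1) → Fin n) (s : Fin (m+1) → Bool) (t : Fin (m+1)),
      Sum.elim id id ((convEquiv m n).symm (f, s) t) = f t := by
    intro f s t
    simp [convEquiv, Equiv.arrowCongr, Equiv.arrowProdEquivProdArrow, sgnEquiv_symm_elim]
  have key : ∑ g : Fin (m+1) → Fin n ⊕ Fin n, 𝒯 g ^ 2
      = 2 ^ m * ∑ f : Fin (m+1) → Fin n, Ψ f ^ 2 := by
    rw [← (convEquiv m n).symm.sum_comp, Fintype.sum_prod_type, Finset.mul_sum]
    refine Finset.sum_congr rfl fun f _ => ?_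
    have : ∀ s : Fin (m+1) → Bool, 𝒯 ((convEquiv m n).symm (f, s)) ^ 2
        = if Even ((univ.filter fun t => s t = true).card) then Ψ f ^ 2 else 0 := by
      intro s
      rw [h𝒯]
      simp only [hE1, hE2]
      by_cases h : Even ((univ.filter fun t => s t = true).card) <;>
        simp [h, mul_pow, ← pow_mul, pow_mul']
    rw [Finset.sum_congr rfl fun s _ => this s]
    exact evenSum m (Ψ f ^ 2)
  unfold fnorm
  rw [key, Real.sqrt_mul (by positivity), Real.sqrt_eq_rpow, ← Real.rpow_natCast 2 m,
    ← Real.rpow_mul (by norm_num), mul_one_div]
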